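/- Conversely, if G' = (V',E') has a Hamiltonian cycle, then in the augmented graph G (with added vertices v†, v₁, v₂ and edges (v†,w), (v₁,v₂), and (v,v₁) for v ∈ N_{G'}(w)), one can delete exactly |E'| − |V'| + |N_{G'}(w)| edges from G to obtain a spanning path of G whose endpoints are v† and v₂. -/

import Mathlib

/-- The augmented graph `G` of the closeness-hardness reduction: to `G'` we add
three vertices `v† = inr 0`, `v₁ = inr 1`, `v₂ = inr 2` and the edges `(v†,w)`,
`(v₁,v₂)`, and `(v,v₁)` for every neighbour `v` of `w` in `G'`. -/
def augGraph {V' : Type*} (G' : SimpleGraph V') (w : V') :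
    SimpleGraph (V' ⊕ Fin 3) :=
  SimpleGraph.fromRel (fun x y =>
    (∃ a b : V', x = Sum.inl a ∧ y = Sum.inl b ∧ G'.Adj a b) ∨
    (x = Sum.inr 0 ∧ y = Sum.inl w) ∨
    (x = Sum.inr 1 ∧ y = Sum.inr 2) ∨
    (∃ a : V', G'.Adj a w ∧ x = Sum.inl a ∧ y = Sum.inr 1))

section Aux

variable {V' : Type*} (G' : SimpleGraph V') (w : V')

lemma aug_adj_inl {a b : V'} (h : G'.Adj a b) :
    (augGraph G' w).Adj (Sum.inl a) (Sum.inl b) := by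
  rw [augGraph, SimpleGraph.fromRel_adj]
  exact ⟨by simpa using h.ne, Or.inl (Or.inl ⟨a, b, rfl, rfl, h⟩)⟩

lemma aug_adj_0w : (augGraph G' w).Adj (Sum.inr 0) (Sum.inl w) := by
  rw [augGraph, SimpleGraph.fromRel_adj]
  exact ⟨by simp, Or.inl (Or.inr (Or.inl ⟨rfl, rfl⟩))⟩

lemma aug_adj_12 : (augGraph G' w).Adj (Sum.inr 1) (Sum.inr 2) := by
  rw [augGraph, SimpleGraph.fromRel_adj]
  exact ⟨by simp, Or.inl (Or.inr (Or.inr (Or.inl ⟨rfl, rfl⟩)))⟩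

lemma aug_adj_n1 {a : V'} (h : G'.Adj a w) :
    (augGraph G' w).Adj (Sum.inl a) (Sum.inr 1) := by
  rw [augGraph, SimpleGraph.fromRel_adj]
  exact ⟨by simp, Or.inl (Or.inr (Or.inr (Or.inr ⟨a, h, rfl, rfl⟩)))⟩

lemma aug_edgeSet :
    (augGraph G' w).edgeSet =
      (Sym2.map Sum.inl '' G'.edgeSet) ∪ {s(Sum.inr 0, Sum.inl w)} ∪ {s(Sum.inr 1, Sum.inr 2)}
        ∪ ((fun a => s(Sum.inl a, Sum.inr 1)) '' G'.neighborSet w) := by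
  ext e
  induction e using Sym2.ind with
  | _ x y =>
    rw [SimpleGraph.mem_edgeSet, augGraph, SimpleGraph.fromRel_adj]
    constructor
    · rintro ⟨hne, (⟨a,b,rfl,rfl,hab⟩|⟨rfl,rfl⟩|⟨rfl,rfl⟩|⟨a,haw,rfl,rfl⟩)|
        (⟨a,b,rfl,rfl,hab⟩|⟨rfl,rfl⟩|⟨rfl,rfl⟩|⟨a,haw,rfl,rfl⟩)⟩
      · exact Or.inl (Or.inl (Or.inl ⟨s(a,b), hab, rfl⟩))
      · exact Or.inl (Or.inl (Or.inr rfl))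
      · exact Or.inl (Or.inr rfl)
      · exact Or.inr ⟨a, haw.symm, rfl⟩
      · exact Or.inl (Or.inl (Or.inl ⟨s(b,a), hab.symm, by rw [Sym2.map_pair_eq, Sym2.eq_swap]⟩))
      · exact Or.inl (Or.inl (Or.inr (Sym2.eq_swap)))
      · exact Or.inl (Or.inr (Sym2.eq_swap))
      · exact Or.inr ⟨a, haw.symm, Sym2.eq_swap⟩
    · rintro ((((⟨e, he, hmap⟩)|h)|h)|⟨a, haw, h⟩)
      · induction e using Sym2.ind with
        | _ a b =>
          rw [Sym2.map_pair_eq, Sym2.eq_iff] at hmap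
          rw [SimpleGraph.mem_edgeSet] at he
          rcases hmap with ⟨rfl, rfl⟩|⟨rfl, rfl⟩
          · exact ((aug_adj_inl G' w he) : _)
          · exact ((aug_adj_inl G' w he.symm) : _)
      · rw [Set.mem_singleton_iff, Sym2.eq_iff] at h
        rcases h with ⟨rfl,rfl⟩|⟨rfl,rfl⟩
        · exact aug_adj_0w G' w
        · exact (aug_adj_0w G' w).symm
      · rw [Set.mem_singleton_iff, Sym2.eq_iff] at h
        rcases h with ⟨rfl,rfl⟩|⟨rfl,rfl⟩
        · exact aug_adj_12 G' w
        · exact (aug_adj_12 G' w).symm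
      · rw [Sym2.eq_iff] at h
        rcases h with ⟨rfl,rfl⟩|⟨rfl,rfl⟩
        · exact aug_adj_n1 G' w haw.symm
        · exact (aug_adj_n1 G' w haw.symm).symm

lemma aug_edgeSet_ncard [DecidableEq V'] [Fintype V'] :
    (augGraph G' w).edgeSet.ncard
      = G'.edgeSet.ncard + (G'.neighborSet w).ncard + 2 := by
  rw [aug_edgeSet]
  have hinj1 : Function.Injective (Sym2.map (Sum.inl : V' → V' ⊕ Fin 3)) :=
    Sym2.map.injective Sum.inl_injective
  have hinj2 : Function.Injective (fun a : V' => s(Sum.inl a, (Sum.inr 1 : V' ⊕ Fin 3))) := by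
    intro a b h
    simp only [Sym2.eq_iff] at h
    rcases h with ⟨h1, _⟩|⟨h1, _⟩ <;> simp_all
  rw [Set.ncard_union_eq ?d1 (Set.toFinite _) (Set.toFinite _),
    Set.ncard_union_eq ?d2 (Set.toFinite _) (Set.toFinite _),
    Set.ncard_union_eq ?d3 (Set.toFinite _) (Set.toFinite _),
    Set.ncard_image_of_injective _ hinj1, Set.ncard_image_of_injective _ hinj2,
    Set.ncard_singleton, Set.ncard_singleton]
  · ring
  case d3 =>
    rw [Set.disjoint_left]
    rintro e ⟨f, hf, rfl⟩ h
    induction f using Sym2.ind with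
    | _ a b => simp [Sym2.eq_iff] at h
  case d2 =>
    rw [Set.disjoint_left]
    rintro e (⟨f, hf, rfl⟩|h) h2
    · induction f using Sym2.ind with
      | _ a b => simp [Sym2.eq_iff] at h2
    · simp only [Set.mem_singleton_iff] at h h2
      subst h
      simp [Sym2.eq_iff] at h2
  case d1 =>
    rw [Set.disjoint_left]
    rintro e ((⟨f, hf, rfl⟩|h)|h) ⟨a, ha, he⟩
    · induction f using Sym2.ind with
      | _ x y => simp [Sym2.eq_iff] at he
    · simp only [Set.mem_singleton_iff] at h
      subst h
      simp [Sym2.eq_iff] at he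
    · simp only [Set.mem_singleton_iff] at h
      subst h
      simp [Sym2.eq_iff] at he

open SimpleGraph Walk in
lemma aug_ham_path [DecidableEq V'] [Fintype V']
    (hham : ∃ (v : V') (c : G'.Walk v v), c.IsHamiltonianCycle) :
    ∃ p : (augGraph G' w).Walk (Sum.inr 0) (Sum.inr 2),
      p.IsHamiltonian ∧ p.edges.length = Fintype.card V' + 2 := by
  obtain ⟨v, c, hc⟩ := hham
  have hw : w ∈ c.support := hc.mem_support w
  set c' := c.rotate w hw with hc'
  have hcyc : c'.IsCycle := hc.isCycle.rotate hw
  have hcount : ∀ a, c'.support.tail.count a = 1 := by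
    intro a
    rw [((support_rotate c w hw).perm).count_eq]
    rw [← SimpleGraph.Walk.support_tail_of_not_nil c hc.isCycle.not_nil]
    exact hc.isHamiltonian_tail a
  obtain ⟨x1, hwx1, q, hq⟩ := SimpleGraph.Walk.not_nil_iff.mp hcyc.not_nil
  have hqcount : ∀ a, q.support.count a = 1 := by
    intro a
    have := hcount a
    rw [hq] at this
    simpa using this
  let f : G' →g augGraph G' w := ⟨Sum.inl, fun h => aug_adj_inl G' w h⟩
  let p : (augGraph G' w).Walk (Sum.inr 0) (Sum.inr 2) :=
    Walk.cons (aug_adj_0w G' w) ((q.reverse.map f).append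
      (Walk.cons (aug_adj_n1 G' w hwx1.symm) (Walk.cons (aug_adj_12 G' w) Walk.nil)))
  have hqham : q.IsHamiltonian := hqcount
  refine ⟨p, ?_, ?_⟩
  · have hsup : p.support = Sum.inr 0 :: ((q.reverse.support.map Sum.inl)
        ++ [Sum.inr 1, Sum.inr 2]) := by
      simp only [p, Walk.support_cons, Walk.support_append, Walk.support_map]
      congr 1
    refine SimpleGraph.Walk.IsPath.isHamiltonian_of_mem (SimpleGraph.Walk.IsPath.mk' ?_) ?_
    · rw [hsup]
      have hnd : (q.support.map (Sum.inl : V' → V' ⊕ Fin 3)).Nodup :=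
        hqham.isPath.support_nodup.map Sum.inl_injective
      simp [List.nodup_append, Walk.support_reverse, List.nodup_reverse, hnd]
    · intro x
      rw [hsup]
      rcases x with a | i
      · have := hqham.mem_support a
        simp only [List.mem_cons, List.mem_append, List.mem_map]
        exact Or.inr (Or.inl ⟨a, by simpa [Walk.support_reverse] using this, rfl⟩)
      · fin_cases i <;> simp
  · have hlen : q.length = Fintype.card V' - 1 := hqham.length_eq
    have hpos : 0 < Fintype.card V' := Fintype.card_pos_iff.mpr ⟨w⟩
    simp only [p, Walk.length_edges, Walk.length_cons, Walk.length_append,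
      Walk.length_map, Walk.length_reverse, Walk.length_nil, hlen]
    omega

end Aux

/-- If `G'` has a Hamiltonian cycle, then the augmented graph `G`
contains a spanning (Hamiltonian) path from `v†` to `v₂` obtained by deleting
exactly `|E'| − |V'| + |N_{G'}(w)|` edges of `G`; equivalently, the number of
edges of the path plus `|E'| + |N_{G'}(w)|` equals `|E(G)| + |V'|`. -/
theorem ham_cycle_to_ham_path_aug
    {V' : Type*} [Fintype V'] [DecidableEq V'] (G' : SimpleGraph V') (w : V')
    (hham : ∃ (v : V') (c : G'.Walk v v), c.IsHamiltonianCycle) :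
    ∃ p : (augGraph G' w).Walk (Sum.inr 0) (Sum.inr 2),
      p.IsHamiltonian ∧
      p.edges.length + G'.edgeSet.ncard + (G'.neighborSet w).ncard
        = (augGraph G' w).edgeSet.ncard + Fintype.card V' := by
  obtain ⟨p, hp, hlen⟩ := aug_ham_path G' w hham
  exact ⟨p, hp, by rw [hlen, aug_edgeSet_ncard G' w]; ring⟩
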